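/- There exists a player-1 strategy π_1 in the labeled game graph Ḡ such that for every player-2 strategy π_2, the set L(ω(v_in,π_1,π_2)) \ {$} is a vertex cover of the graph G. -/

import Mathlib

/-- `π` is a valid strategy for the player owning the vertices satisfying `owns`:
for every history `w` and current vertex `v` owned by the player, the chosen
successor `π w v` is along an edge of the game graph. -/
def IsStrat {V : Type*} (E : V → V → Prop) (owns : V → Prop)
    (π : List V → V → V) : Prop :=
  ∀ (w : List V) (v : V), owns v → E v (π w v)

/-- Auxiliary function computing, after `i` steps of the play from `v`, the pair
(current vertex, history of previously visited vertices).  Here `P1 v = true` means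
`v` is a player-1 vertex, and `P1 v = false` that it is a player-2 vertex. -/
def playSeq {V : Type*} (P1 : V → Bool) (π1 π2 : List V → V → V) (v : V) :
    ℕ → V × List V
  | 0 => (v, [])
  | i + 1 =>
    let p := playSeq P1 π1 π2 v i
    (if P1 p.1 then π1 p.2 p.1 else π2 p.2 p.1, p.2 ++ [p.1])

/-- The unique play `ω(v, π1, π2)`: the `i`-th vertex of the infinite play starting
at `v` in which player 1 (resp. player 2) resolves choices at vertices `u` with
`P1 u = true` (resp. `P1 u = false`) using strategy `π1` (resp. `π2`). -/
def play {V : Type*} (P1 : V → Bool) (π1 π2 : List V → V → V) (v : V) (i : ℕ) : V :=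
  (playSeq P1 π1 π2 v i).1

/-- `U` is a vertex cover of the undirected graph `G`: every edge of `G` has at
least one endpoint in `U`. -/
def IsVertexCover {V : Type*} (G : SimpleGraph V) (U : Set V) : Prop :=
  ∀ a b : V, G.Adj a b → a ∈ U ∨ b ∈ U

/-- The vertices of the labeled game graph `Ḡ` built from the undirected graph `G`:
the initial vertex `v_in` (`Sum.inl ()`), a vertex for each edge `e` of `G`
(`Sum.inr (Sum.inl e)`), and a vertex `(e,u)` for each edge `e` and endpoint `u` of
`e` (`Sum.inr (Sum.inr ...)`). -/
def BarV {V : Type*} (G : SimpleGraph V) : Type _ :=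
  Unit ⊕ (G.edgeSet ⊕ {p : Sym2 V × V // p.1 ∈ G.edgeSet ∧ p.2 ∈ p.1})

/-- The edges of `Ḡ`: from `v_in` to every edge-vertex, from each edge-vertex `e` to
the endpoint vertices `(e,u)` with `u ∈ e`, and from every endpoint vertex back to
`v_in`. -/
def BarE {V : Type*} (G : SimpleGraph V) : BarV G → BarV G → Prop
  | Sum.inl _, Sum.inr (Sum.inl _) => True
  | Sum.inr (Sum.inl e), Sum.inr (Sum.inr p) => p.val.1 = e.val
  | Sum.inr (Sum.inr _), Sum.inl _ => True
  | _, _ => False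

/-- The partition of the vertices of `Ḡ`: the edge-vertices belong to player 2 and
all other vertices belong to player 1. -/
def BarP1 {V : Type*} (G : SimpleGraph V) : BarV G → Bool
  | Sum.inr (Sum.inl _) => false
  | _ => true

/-- The labeling of `Ḡ` with propositions `AP = V ∪ {$}`, encoded as `Option V`
(with `none` playing the role of `$`): the initial vertex and the edge-vertices are
labeled `{$}`, and each endpoint vertex `(e,u)` is labeled `{u}`. -/
def BarL {V : Type*} (G : SimpleGraph V) : BarV G → Set (Option V)
  | Sum.inr (Sum.inr p) => {some p.val.2}
  | _ => {none}

/-- There exists a player-1 strategy `π_1` in the labeled game graph `Ḡ` such that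
for every player-2 strategy `π_2`, the set `L(ω(v_in,π_1,π_2)) \ {$}` is a vertex
cover of the graph `G`. -/
theorem player1_strategy_forces_vertex_cover
    {V : Type*} [Fintype V] (G : SimpleGraph V) (hne : G.edgeSet.Nonempty) :
    ∃ π1, IsStrat (BarE G) (fun v => BarP1 G v = true) π1 ∧
      ∀ π2, IsStrat (BarE G) (fun v => BarP1 G v = false) π2 →
        IsVertexCover G
          {u : V | some u ∈ ⋃ i : ℕ, BarL G (play (BarP1 G) π1 π2 (Sum.inl ()) i)} := by
  classical
  haveI : Nonempty G.edgeSet := hne.to_subtype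
  obtain ⟨f, hf⟩ := exists_surjective_nat G.edgeSet
  have hdiv : ∀ k : ℕ, 3 * k / 3 = k := fun k => by omega
  set π1 : List (BarV G) → BarV G → BarV G := fun w v =>
    Sum.elim (fun _ => (Sum.inr (Sum.inl (f (w.length / 3))) : BarV G))
      (fun _ => (Sum.inl () : BarV G)) v with hπ1
  refine ⟨π1, ?_, ?_⟩
  · intro w v hv
    rcases v with _ | (e | p)
    · exact trivial
    · exact absurd hv (by simp [BarP1])
    · exact trivial
  · intro π2 hπ2
    have succ2 : ∀ (w : List (BarV G)) (e : G.edgeSet),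
        ∃ p, π2 w (Sum.inr (Sum.inl e)) = Sum.inr (Sum.inr p) ∧ p.val.1 = e.val := by
      intro w e
      have h := hπ2 w (Sum.inr (Sum.inl e)) rfl
      rcases hx : π2 w (Sum.inr (Sum.inl e)) with _ | (e' | p)
      · rw [hx] at h; exact absurd h (by simp [BarE])
      · rw [hx] at h; exact absurd h (by simp [BarE])
      · rw [hx] at h; exact ⟨p, rfl, h⟩
    have key : ∀ k : ℕ,
        (playSeq (BarP1 G) π1 π2 (Sum.inl ()) (3 * k)).1 = Sum.inl () ∧
        (playSeq (BarP1 G) π1 π2 (Sum.inl ()) (3 * k)).2.length = 3 * k := by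
      intro k
      induction k with
      | zero => exact ⟨rfl, rfl⟩
      | succ k ih =>
        obtain ⟨h1, h2⟩ := ih
        have e1a : (playSeq (BarP1 G) π1 π2 (Sum.inl ()) (3 * k + 1)).1 =
            Sum.inr (Sum.inl (f k)) := by
          show (if BarP1 G (playSeq (BarP1 G) π1 π2 (Sum.inl ()) (3 * k)).1
              then π1 _ _ else π2 _ _) = _
          rw [h1]
          simp only [BarP1, if_pos rfl]
          show π1 _ (Sum.inl ()) = _
          show Sum.inr (Sum.inl (f ((playSeq (BarP1 G) π1 π2 (Sum.inl ()) (3 * k)).2.length / 3))) = _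
          rw [h2, hdiv]
        have e1b : (playSeq (BarP1 G) π1 π2 (Sum.inl ()) (3 * k + 1)).2.length =
            3 * k + 1 := by
          show ((playSeq (BarP1 G) π1 π2 (Sum.inl ()) (3 * k)).2 ++ _).length = _
          rw [List.length_append, h2]; simp
        obtain ⟨p, hp, hpe⟩ :=
          succ2 ((playSeq (BarP1 G) π1 π2 (Sum.inl ()) (3 * k + 1)).2) (f k)
        have e2 : (playSeq (BarP1 G) π1 π2 (Sum.inl ()) (3 * k + 2)).1 =
            Sum.inr (Sum.inr p) := by
          show (if BarP1 G (playSeq (BarP1 G) π1 π2 (Sum.inl ()) (3 * k + 1)).1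
              then π1 _ _ else π2 _ _) = _
          rw [e1a]
          simp only [BarP1]
          refine (if_neg Bool.false_ne_true).trans ?_
          exact hp
        have len2 : (playSeq (BarP1 G) π1 π2 (Sum.inl ()) (3 * k + 2)).2.length =
            3 * k + 2 := by
          show ((playSeq (BarP1 G) π1 π2 (Sum.inl ()) (3 * k + 1)).2 ++ _).length = _
          rw [List.length_append, e1b]; simp
        have hk3 : 3 * (k + 1) = (3 * k + 2) + 1 := by omega
        rw [hk3]
        constructor
        · show (if BarP1 G (playSeq (BarP1 G) π1 π2 (Sum.inl ()) (3 * k + 2)).1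
              then π1 _ _ else π2 _ _) = _
          rw [e2]
          simp only [BarP1, if_pos rfl]
          rfl
        · show ((playSeq (BarP1 G) π1 π2 (Sum.inl ()) (3 * k + 2)).2 ++ _).length = _
          rw [List.length_append, len2]; simp
    intro a b hab
    obtain ⟨k, hk⟩ := hf ⟨s(a, b), hab⟩
    obtain ⟨h1, h2⟩ := key k
    have e1a : (playSeq (BarP1 G) π1 π2 (Sum.inl ()) (3 * k + 1)).1 =
        Sum.inr (Sum.inl (f k)) := by
      show (if BarP1 G (playSeq (BarP1 G) π1 π2 (Sum.inl ()) (3 * k)).1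
          then π1 _ _ else π2 _ _) = _
      rw [h1]
      simp only [BarP1, if_pos rfl]
      show π1 _ (Sum.inl ()) = _
      show Sum.inr (Sum.inl (f ((playSeq (BarP1 G) π1 π2 (Sum.inl ()) (3 * k)).2.length / 3))) = _
      rw [h2, hdiv]
    obtain ⟨p, hp, hpe⟩ :=
      succ2 ((playSeq (BarP1 G) π1 π2 (Sum.inl ()) (3 * k + 1)).2) (f k)
    have e2 : play (BarP1 G) π1 π2 (Sum.inl ()) (3 * k + 2) = Sum.inr (Sum.inr p) := by
      show (if BarP1 G (playSeq (BarP1 G) π1 π2 (Sum.inl ()) (3 * k + 1)).1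
          then π1 _ _ else π2 _ _) = _
      rw [e1a]
      simp only [BarP1]
      refine (if_neg Bool.false_ne_true).trans ?_
      exact hp
    have hmem : some p.val.2 ∈
        ⋃ i : ℕ, BarL G (play (BarP1 G) π1 π2 (Sum.inl ()) i) := by
      refine Set.mem_iUnion.2 ⟨3 * k + 2, ?_⟩
      rw [e2]
      exact rfl
    have hin : p.val.2 ∈ s(a, b) := by
      have h := p.property.2
      rw [hpe] at h
      have : (f k : Sym2 V) = s(a, b) := by rw [hk]
      rwa [this] at h
    rcases Sym2.mem_iff.mp hin with h | h
    · exact Or.inl (by rw [← h]; exact hmem)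
    · exact Or.inr (by rw [← h]; exact hmem)
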